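/- arXiv:1301.3056 — 3 statements merged into one kernel-verified Lean document; each statement's English description precedes it below -/
import Mathlib

section
/- Let M be a symmetric (or more generally any) square matrix over a commutative ring, and for subsets I, J of indices with |I|=|J| let M(I,J) denote the minor obtained by deleting rows I and columns J. Then the Dodgson/Desnanot–Jacobi identity holds: det M(x,x)·det M(a,b) − det M·det M(ax,bx) = det M(x,b)·det M(a,x), for distinct indices a, b, x. -/
open Matrix

section DodgsonAux

variable {R : Type*} [CommRing R] {n : Type*} [Fintype n] [DecidableEq n]

set_option linter.unusedSectionVars false

lemma aux_updateRow_comm (A : Matrix n n R) {i j : n} (h : i ≠ j) (u v : n → R) :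
    (A.updateRow i u).updateRow j v = (A.updateRow j v).updateRow i u := by
  ext r c
  simp only [updateRow_apply]
  split_ifs with h1 h2 <;> first | rfl | (exfalso; exact h (h2 ▸ h1))

lemma aux_det_updateRow_expand (A : Matrix n n R) (x : n) (v : n → R) :
    (A.updateRow x v).det = ∑ i, v i * (A.updateRow x (Pi.single i 1)).det := by
  classical
  have key : ∀ s : Finset n, (A.updateRow x (fun j => if j ∈ s then v j else 0)).det
      = ∑ i ∈ s, v i * (A.updateRow x (Pi.single i 1)).det := by
    intro s
    induction s using Finset.induction_on with
    | empty =>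
      simp only [Finset.notMem_empty, if_false, Finset.sum_empty]
      exact det_eq_zero_of_row_eq_zero x (by simp)
    | @insert a s ha ih =>
      have hsplit : (fun j => if j ∈ insert a s then v j else 0)
          = (v a • (Pi.single a 1 : n → R)) + fun j => if j ∈ s then v j else 0 := by
        funext j
        by_cases hj : j = a
        · subst hj; simp [ha, Pi.single_apply]
        · simp [hj, Pi.single_apply, Ne.symm hj]
      rw [hsplit, det_updateRow_add, det_updateRow_smul, ih, Finset.sum_insert ha]
  have := key Finset.univ
  simpa using this

lemma aux_det_updateColumn_single (A : Matrix n n R) (i j : n) :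
    (A.updateCol j (Pi.single i 1)).det = adjugate A j i := by
  rw [← det_transpose, ← updateRow_transpose, ← adjugate_apply, ← adjugate_transpose]
  rfl

lemma aux_one_row (k : n) : (1 : Matrix n n R) k = Pi.single k 1 := by
  funext l; simp [one_apply, Pi.single_apply, eq_comm]

section TwoRows

variable {b x : n} (u v : n → R)

private lemma rowb (i j : n) :
    (((1 : Matrix n n R).updateRow x (Pi.single j 1)).updateRow b (Pi.single i 1)) b
      = Pi.single i 1 := by simp

private lemma rowx (i j : n) (hbx : b ≠ x) :
    (((1 : Matrix n n R).updateRow x (Pi.single j 1)).updateRow b (Pi.single i 1)) x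
      = Pi.single j 1 := by
  rw [updateRow_ne (Ne.symm hbx), updateRow_self]

private lemma rowo (i j : n) {r : n} (h1 : r ≠ b) (h2 : r ≠ x) :
    (((1 : Matrix n n R).updateRow x (Pi.single j 1)).updateRow b (Pi.single i 1)) r
      = Pi.single r 1 := by
  rw [updateRow_ne h1, updateRow_ne h2, aux_one_row]

private lemma hE1 :
    (((1 : Matrix n n R).updateRow x (Pi.single x 1)).updateRow b (Pi.single b 1)).det = 1 := by
  rw [← aux_one_row x, updateRow_eq_self, ← aux_one_row b, updateRow_eq_self, det_one]

private lemma hE2 (hbx : b ≠ x) :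
    (((1 : Matrix n n R).updateRow x (Pi.single b 1)).updateRow b (Pi.single x 1)).det
      = -1 := by
  have hperm : (((1 : Matrix n n R).updateRow x (Pi.single b 1)).updateRow b (Pi.single x 1))
      = (Equiv.swap b x).permMatrix R := by
    ext r c
    by_cases hr1 : r = b
    · subst hr1
      simp [Equiv.Perm.permMatrix, PEquiv.toMatrix_apply, Equiv.swap_apply_left,
        Pi.single_apply, eq_comm, Equiv.toPEquiv_apply, Option.some.injEq]
    · by_cases hr2 : r = x
      · subst hr2
        simp [updateRow_ne hr1, Equiv.Perm.permMatrix, PEquiv.toMatrix_apply,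
          Equiv.swap_apply_right, Pi.single_apply, eq_comm, Equiv.toPEquiv_apply, Option.some.injEq]
      · simp [updateRow_ne hr1, updateRow_ne hr2, Equiv.Perm.permMatrix,
          PEquiv.toMatrix_apply, Equiv.swap_apply_of_ne_of_ne hr1 hr2, one_apply,
          Pi.single_apply, eq_comm, Equiv.toPEquiv_apply, Option.some.injEq]
  rw [hperm, det_permutation, Equiv.Perm.sign_swap hbx]
  simp

private lemma hE0 (hbx : b ≠ x) (i j : n) (hne1 : ¬(i = b ∧ j = x)) (hne2 : ¬(i = x ∧ j = b)) :
    (((1 : Matrix n n R).updateRow x (Pi.single j 1)).updateRow b (Pi.single i 1)).det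
      = 0 := by
  by_cases hib : i = b
  · have hjx : j ≠ x := fun h => hne1 ⟨hib, h⟩
    by_cases hjb : j = b
    · exact det_zero_of_row_eq hbx (by rw [rowb, rowx i j hbx, hib, hjb])
    · exact det_zero_of_row_eq (Ne.symm hjx) (by rw [rowx i j hbx, rowo i j hjb hjx])
  · by_cases hix : i = x
    · have hjb : j ≠ b := fun h => hne2 ⟨hix, h⟩
      by_cases hjx : j = x
      · exact det_zero_of_row_eq hbx (by rw [rowb, rowx i j hbx, hix, hjx])
      · exact det_zero_of_row_eq (Ne.symm hjx) (by rw [rowx i j hbx, rowo i j hjb hjx])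
    · exact det_zero_of_row_eq (show b ≠ i from fun h => hib h.symm)
        (by rw [rowb, rowo i j hib hix])

lemma aux_det_one_two_rows (hbx : b ≠ x) :
    (((1 : Matrix n n R).updateRow b u).updateRow x v).det = u b * v x - u x * v b := by
  rw [aux_det_updateRow_expand]
  have hg : ∀ j : n, (((1 : Matrix n n R).updateRow b u).updateRow x (Pi.single j 1)).det
      = if j = x then u b else if j = b then -(u x) else 0 := by
    intro j
    rw [aux_updateRow_comm _ hbx, aux_det_updateRow_expand]
    by_cases hjx : j = x
    · subst hjx
      rw [if_pos rfl, Fintype.sum_eq_single b]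
      · rw [hE1, mul_one]
      · intro i hi
        rw [hE0 hbx i j (fun h => hi h.1) (fun h => hbx h.2.symm), mul_zero]
    · by_cases hjb : j = b
      · subst hjb
        rw [if_neg hjx, if_pos rfl, Fintype.sum_eq_single x]
        · rw [hE2 hbx]; ring
        · intro i hi
          rw [hE0 hbx i j (fun h => hjx h.2) (fun h => hi h.1), mul_zero]
      · rw [if_neg hjx, if_neg hjb]
        apply Finset.sum_eq_zero
        intro i _
        rw [hE0 hbx i j (fun h => hjx h.2) (fun h => hjb h.2), mul_zero]
  calc (∑ j, v j * (((1 : Matrix n n R).updateRow b u).updateRow x (Pi.single j 1)).det)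
      = ∑ j ∈ ({b, x} : Finset n), v j *
          (((1 : Matrix n n R).updateRow b u).updateRow x (Pi.single j 1)).det := by
        refine (Finset.sum_subset (Finset.subset_univ _) ?_).symm
        intro j _ hj
        simp only [Finset.mem_insert, Finset.mem_singleton, not_or] at hj
        rw [hg j, if_neg hj.2, if_neg hj.1, mul_zero]
    _ = u b * v x - u x * v b := by
        rw [Finset.sum_pair hbx, hg b, hg x, if_pos rfl, if_neg hbx, if_pos rfl]
        ring

end TwoRows

lemma aux_updateColumn_comm (A : Matrix n n R) {i j : n} (h : i ≠ j) (u v : n → R) :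
    (A.updateCol i u).updateCol j v = (A.updateCol j v).updateCol i u := by
  ext r c
  simp only [updateCol_apply]
  split_ifs with h1 h2 <;> first | rfl | (exfalso; exact h (h2 ▸ h1))

lemma aux_mul_key {m : ℕ} (M : Matrix (Fin (m + 2)) (Fin (m + 2)) R) (x : Fin (m + 2))
    (a' b' : Fin (m + 1)) :
    M.det * (adjugate M x x * adjugate M (x.succAbove b') (x.succAbove a')
      - adjugate M (x.succAbove b') x * adjugate M x (x.succAbove a'))
    = M.det * (M.det * adjugate (M.submatrix x.succAbove x.succAbove) b' a') := by
  set a := x.succAbove a' with ha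
  set b := x.succAbove b' with hb
  have hbx : b ≠ x := Fin.succAbove_ne x b'
  have hax : a ≠ x := Fin.succAbove_ne x a'
  set C : Matrix (Fin (m + 2)) (Fin (m + 2)) R :=
    ((1 : Matrix (Fin (m + 2)) (Fin (m + 2)) R).updateCol b
      (fun i => adjugate M i a)).updateCol x (fun i => adjugate M i x) with hC
  have hdetC : C.det =
      adjugate M b a * adjugate M x x - adjugate M x a * adjugate M b x := by
    have hCt : Cᵀ = ((1 : Matrix (Fin (m + 2)) (Fin (m + 2)) R).updateRow b
        (fun i => adjugate M i a)).updateRow x (fun i => adjugate M i x) := by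
      rw [hC, ← updateRow_transpose, ← updateRow_transpose, transpose_one]
    rw [← det_transpose, hCt, aux_det_one_two_rows _ _ hbx]
  have hMC : M * C = ((M.updateCol b
      (M.det • (Pi.single a 1 : Fin (m + 2) → R))).updateCol x
      (M.det • (Pi.single x 1 : Fin (m + 2) → R))) := by
    ext i j
    rw [mul_apply]
    by_cases hjx : j = x
    · subst hjx
      have h1 : ∀ k, C k j = adjugate M k j := fun k => by rw [hC, updateCol_self]
      simp only [h1]
      have : ∑ k, M i k * adjugate M k j = (M * adjugate M) i j := (mul_apply).symm
      rw [this, mul_adjugate, updateCol_self]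
      simp [one_apply, Pi.single_apply, Matrix.smul_apply]
    · by_cases hjb : j = b
      · have h1 : ∀ k, C k j = adjugate M k a := fun k => by
          rw [hC, updateCol_ne hjx, hjb, updateCol_self]
        simp only [h1]
        have h2 : ∑ k, M i k * adjugate M k a = (M * adjugate M) i a := (mul_apply).symm
        rw [h2, mul_adjugate, updateCol_ne hjx, hjb, updateCol_self]
        simp [one_apply, Pi.single_apply, Matrix.smul_apply]
      · have h1 : ∀ k, C k j = (1 : Matrix (Fin (m + 2)) (Fin (m + 2)) R) k j := fun k => by
          rw [hC, updateCol_ne hjx, updateCol_ne hjb]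
        simp only [h1]
        have h2 : ∑ k, M i k * (1 : Matrix (Fin (m + 2)) (Fin (m + 2)) R) k j
            = (M * (1 : Matrix (Fin (m + 2)) (Fin (m + 2)) R)) i j := (mul_apply).symm
        rw [h2, mul_one, updateCol_ne hjx, updateCol_ne hjb]
  have hdetB : ((M.updateCol b (Pi.single a 1 : Fin (m + 2) → R)).updateCol x
      (Pi.single x 1 : Fin (m + 2) → R)).det
      = adjugate (M.submatrix x.succAbove x.succAbove) b' a' := by
    rw [aux_det_updateColumn_single]
    have hadj := adjugate_fin_succ_eq_det_submatrix
      (M.updateCol b (Pi.single a 1 : Fin (m + 2) → R)) x x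
    rw [hadj]
    have hsign : ((-1 : R)) ^ ((x : ℕ) + (x : ℕ)) = 1 := by
      rw [← two_mul, pow_mul]; norm_num
    rw [hsign, one_mul]
    have hsub : (M.updateCol b (Pi.single a 1 : Fin (m + 2) → R)).submatrix
        x.succAbove x.succAbove
        = (M.submatrix x.succAbove x.succAbove).updateCol b'
          (Pi.single a' 1 : Fin (m + 1) → R) := by
      ext i j
      simp only [submatrix_apply, updateCol_apply, hb, ha,
        (Fin.succAbove_right_injective (p := x)).eq_iff, Pi.single_apply]
    rw [hsub, aux_det_updateColumn_single]
  calc M.det * (adjugate M x x * adjugate M b a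
        - adjugate M b x * adjugate M x a)
      = M.det * C.det := by rw [hdetC]; ring
    _ = (M * C).det := (det_mul _ _).symm
    _ = M.det * (M.det * adjugate (M.submatrix x.succAbove x.succAbove) b' a') := by
        rw [hMC, det_updateCol_smul, aux_updateColumn_comm _ hbx,
          det_updateCol_smul, aux_updateColumn_comm _ (Ne.symm hbx), hdetB]

lemma aux_adj_jacobi {m : ℕ} (M : Matrix (Fin (m + 2)) (Fin (m + 2)) R) (x : Fin (m + 2))
    (a' b' : Fin (m + 1)) :
    adjugate M x x * adjugate M (x.succAbove b') (x.succAbove a')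
      - adjugate M (x.succAbove b') x * adjugate M x (x.succAbove a')
    = M.det * adjugate (M.submatrix x.succAbove x.succAbove) b' a' := by
  let S := MvPolynomial (Fin (m + 2) × Fin (m + 2)) ℤ
  let A : Matrix (Fin (m + 2)) (Fin (m + 2)) S := mvPolynomialX (Fin (m + 2)) (Fin (m + 2)) ℤ
  let φ : S →ₐ[ℤ] R := MvPolynomial.aeval fun p => M p.1 p.2
  have hM : φ.mapMatrix A = M := mvPolynomialX_mapMatrix_aeval ℤ M
  have hgen : adjugate A x x * adjugate A (x.succAbove b') (x.succAbove a')
      - adjugate A (x.succAbove b') x * adjugate A x (x.succAbove a')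
      = A.det * adjugate (A.submatrix x.succAbove x.succAbove) b' a' :=
    mul_left_cancel₀ (det_mvPolynomialX_ne_zero (Fin (m + 2)) ℤ) (aux_mul_key A x a' b')
  have e1 : ∀ i j, adjugate M i j = φ (adjugate A i j) := by
    intro i j
    rw [← hM, ← AlgHom.map_adjugate]
    rfl
  have e2 : M.det = φ A.det := by rw [← hM, AlgHom.map_det]
  have e3 : adjugate (M.submatrix x.succAbove x.succAbove) b' a'
      = φ (adjugate (A.submatrix x.succAbove x.succAbove) b' a') := by
    have : M.submatrix x.succAbove x.succAbove
        = φ.mapMatrix (A.submatrix x.succAbove x.succAbove) := by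
      rw [← hM]; ext i j; rfl
    rw [this, ← AlgHom.map_adjugate]
    rfl
  rw [e1, e1, e1, e1, e2, e3, ← _root_.map_mul, ← _root_.map_mul, ← map_sub, ← _root_.map_mul, hgen]

end DodgsonAux

/-- The minor `det M(I,J)` of a square matrix `M`, obtained by deleting the rows indexed by
`I` and the columns indexed by `J` (the remaining rows and columns being taken in increasing
order, which fixes the signs). -/
def matrixMinor {n k : ℕ} {R : Type*} [CommRing R] (M : Matrix (Fin n) (Fin n) R)
    (I J : Finset (Fin n)) (hI : Iᶜ.card = k) (hJ : Jᶜ.card = k) : R :=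
  Matrix.det (Matrix.of fun i j : Fin k => M (Iᶜ.orderEmbOfFin hI i) (Jᶜ.orderEmbOfFin hJ j))

/-- The Dodgson / Desnanot–Jacobi identity: for distinct indices `a, b, x` (with signs fixed
by taking `a < x` and `b < x`),
`det M(x,x)·det M(a,b) − det M·det M({a,x},{b,x}) = det M(x,b)·det M(a,x)`. -/
theorem dodgson_identity {n : ℕ} {R : Type*} [CommRing R] (M : Matrix (Fin n) (Fin n) R)
    (a b x : Fin n) (hab : a ≠ b) (hax : a < x) (hbx : b < x)
    (h1 : ({x} : Finset (Fin n))ᶜ.card = n - 1)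
    (h2 : ({a} : Finset (Fin n))ᶜ.card = n - 1)
    (h3 : ({b} : Finset (Fin n))ᶜ.card = n - 1)
    (h4 : ({a, x} : Finset (Fin n))ᶜ.card = n - 2)
    (h5 : ({b, x} : Finset (Fin n))ᶜ.card = n - 2) :
    matrixMinor M {x} {x} h1 h1 * matrixMinor M {a} {b} h2 h3
      - M.det * matrixMinor M {a, x} {b, x} h4 h5
      = matrixMinor M {x} {b} h1 h3 * matrixMinor M {a} {x} h2 h1 := by
  have hax' : (a : ℕ) < (x : ℕ) := hax
  have hbx' : (b : ℕ) < (x : ℕ) := hbx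
  have hxn : (x : ℕ) < n := x.2
  obtain ⟨m, rfl⟩ : ∃ m, n = m + 2 := ⟨n - 2, by omega⟩
  have hxm : (x : ℕ) ≤ m + 1 := by omega
  set a' : Fin (m + 1) := ⟨a, by omega⟩ with ha'
  set b' : Fin (m + 1) := ⟨b, by omega⟩ with hb'
  have hsa : x.succAbove a' = a := by
    rw [Fin.succAbove_of_castSucc_lt x a' (Fin.lt_def.mpr hax')]
    exact Fin.ext rfl
  have hsb : x.succAbove b' = b := by
    rw [Fin.succAbove_of_castSucc_lt x b' (Fin.lt_def.mpr hbx')]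
    exact Fin.ext rfl
  -- the order embeddings
  have hex : ∀ i, (({x} : Finset (Fin (m + 2)))ᶜ).orderEmbOfFin h1 i = x.succAbove i := by
    intro i
    rw [← Finset.orderEmbOfFin_unique h1 (f := x.succAbove)
      (fun i => by simp [Fin.succAbove_ne]) (Fin.strictMono_succAbove x)]
  have hea : ∀ i, (({a} : Finset (Fin (m + 2)))ᶜ).orderEmbOfFin h2 i = a.succAbove i := by
    intro i
    rw [← Finset.orderEmbOfFin_unique h2 (f := a.succAbove)
      (fun i => by simp [Fin.succAbove_ne]) (Fin.strictMono_succAbove a)]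
  have heb : ∀ i, (({b} : Finset (Fin (m + 2)))ᶜ).orderEmbOfFin h3 i = b.succAbove i := by
    intro i
    rw [← Finset.orderEmbOfFin_unique h3 (f := b.succAbove)
      (fun i => by simp [Fin.succAbove_ne]) (Fin.strictMono_succAbove b)]
  have hmemax : ∀ i : Fin m, x.succAbove (a'.succAbove i) ∈ ({a, x} : Finset (Fin (m + 2)))ᶜ := by
    intro i
    simp only [Finset.mem_compl, Finset.mem_insert, Finset.mem_singleton, not_or]
    refine ⟨fun h => ?_, Fin.succAbove_ne x _⟩
    rw [← hsa] at h
    exact Fin.succAbove_ne a' i (Fin.succAbove_right_injective h)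
  have hmembx : ∀ i : Fin m, x.succAbove (b'.succAbove i) ∈ ({b, x} : Finset (Fin (m + 2)))ᶜ := by
    intro i
    simp only [Finset.mem_compl, Finset.mem_insert, Finset.mem_singleton, not_or]
    refine ⟨fun h => ?_, Fin.succAbove_ne x _⟩
    rw [← hsb] at h
    exact Fin.succAbove_ne b' i (Fin.succAbove_right_injective h)
  have heax : ∀ i, (({a, x} : Finset (Fin (m + 2)))ᶜ).orderEmbOfFin h4 i
      = x.succAbove (a'.succAbove i) := by
    intro i
    rw [← Finset.orderEmbOfFin_unique h4 (f := fun i => x.succAbove (a'.succAbove i))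
      hmemax ((Fin.strictMono_succAbove x).comp (Fin.strictMono_succAbove a'))]
  have hebx : ∀ i, (({b, x} : Finset (Fin (m + 2)))ᶜ).orderEmbOfFin h5 i
      = x.succAbove (b'.succAbove i) := by
    intro i
    rw [← Finset.orderEmbOfFin_unique h5 (f := fun i => x.succAbove (b'.succAbove i))
      hmembx ((Fin.strictMono_succAbove x).comp (Fin.strictMono_succAbove b'))]
  -- rewrite the minors as determinants of submatrices
  have e_xx : matrixMinor M {x} {x} h1 h1 = (M.submatrix x.succAbove x.succAbove).det := by
    unfold matrixMinor; congr 1; ext i j; rw [of_apply, submatrix_apply, hex, hex]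
  have e_ab : matrixMinor M {a} {b} h2 h3 = (M.submatrix a.succAbove b.succAbove).det := by
    unfold matrixMinor; congr 1; ext i j; rw [of_apply, submatrix_apply, hea, heb]
  have e_xb : matrixMinor M {x} {b} h1 h3 = (M.submatrix x.succAbove b.succAbove).det := by
    unfold matrixMinor; congr 1; ext i j; rw [of_apply, submatrix_apply, hex, heb]
  have e_ax : matrixMinor M {a} {x} h2 h1 = (M.submatrix a.succAbove x.succAbove).det := by
    unfold matrixMinor; congr 1; ext i j; rw [of_apply, submatrix_apply, hea, hex]
  have e_d : matrixMinor M {a, x} {b, x} h4 h5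
      = ((M.submatrix x.succAbove x.succAbove).submatrix a'.succAbove b'.succAbove).det := by
    unfold matrixMinor; congr 1; ext i j
    rw [of_apply, submatrix_apply, submatrix_apply, heax, hebx]
  -- determinants of submatrices as adjugate entries
  have hdet : ∀ i j : Fin (m + 2), (M.submatrix j.succAbove i.succAbove).det
      = (-1 : R) ^ ((i : ℕ) + (j : ℕ)) * adjugate M i j := by
    intro i j
    rw [adjugate_fin_succ_eq_det_submatrix M i j, ← mul_assoc, ← pow_add]
    have he : (-1 : R) ^ ((i : ℕ) + (j : ℕ) + ((j : ℕ) + (i : ℕ))) = 1 := by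
      have h' : (i : ℕ) + (j : ℕ) + ((j : ℕ) + (i : ℕ)) = 2 * ((i : ℕ) + (j : ℕ)) := by ring
      rw [h', pow_mul]; norm_num
    rw [he, one_mul]
  have hdetN : ((M.submatrix x.succAbove x.succAbove).submatrix a'.succAbove b'.succAbove).det
      = (-1 : R) ^ ((b : ℕ) + (a : ℕ)) *
        adjugate (M.submatrix x.succAbove x.succAbove) b' a' := by
    have := adjugate_fin_succ_eq_det_submatrix (M.submatrix x.succAbove x.succAbove) b' a'
    rw [this, ← mul_assoc, ← pow_add]
    have hca : (a' : ℕ) = (a : ℕ) := rfl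
    have hcb : (b' : ℕ) = (b : ℕ) := rfl
    have he : (-1 : R) ^ ((b : ℕ) + (a : ℕ) + ((a' : ℕ) + (b' : ℕ))) = 1 := by
      rw [hca, hcb]
      have h' : (b : ℕ) + (a : ℕ) + ((a : ℕ) + (b : ℕ)) = 2 * ((a : ℕ) + (b : ℕ)) := by ring
      rw [h', pow_mul]; norm_num
    rw [he, one_mul]
  have key := aux_adj_jacobi M x a' b'
  rw [hsa, hsb] at key
  rw [e_xx, e_ab, e_xb, e_ax, e_d, hdetN, hdet x x, hdet b a, hdet b x, hdet x a]
  have p1 : ((-1 : R)) ^ ((x : ℕ) + (x : ℕ)) = 1 := by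
    rw [← two_mul, pow_mul]; norm_num
  have p2 : ((-1 : R)) ^ ((b : ℕ) + (x : ℕ)) * ((-1 : R)) ^ ((x : ℕ) + (a : ℕ))
      = (-1 : R) ^ ((b : ℕ) + (a : ℕ)) := by
    rw [← pow_add]
    have h' : (b : ℕ) + (x : ℕ) + ((x : ℕ) + (a : ℕ))
        = 2 * (x : ℕ) + ((b : ℕ) + (a : ℕ)) := by ring
    rw [h', pow_add, pow_mul]; norm_num
  rw [p1, one_mul]
  linear_combination ((-1 : R) ^ ((b : ℕ) + (a : ℕ))) * key
    - M.adjugate b x * M.adjugate x a * p2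
end

section
/- For a connected graph G with a 3-valent vertex whose incident edges are 1, 2, 3, the graph polynomial has the form Ψ_G = f₀(α₁α₂ + α₁α₃ + α₂α₃) + (f₁+f₂)α₃ + (f₂+f₃)α₁ + (f₁+f₃)α₂ + f₁₂₃, where f₀, f₁, f₂, f₃, f₁₂₃ are polynomials not involving α₁, α₂, α₃. -/
open scoped Classical

/-- The set of edges of a simple graph, as a `Finset` of `Sym2 V`. -/
noncomputable def edgeFS {V : Type*} [Fintype V] [DecidableEq V] (G : SimpleGraph V) :
    Finset (Sym2 V) :=
  Finset.univ.filter (· ∈ G.edgeSet)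

/-- The spanning trees of `G`, encoded as those subsets `T` of the edge set of `G`
for which the graph on `V` with edge set `T` is a tree. -/
noncomputable def spanningTrees {V : Type*} [Fintype V] [DecidableEq V] (G : SimpleGraph V) :
    Finset (Finset (Sym2 V)) :=
  (edgeFS G).powerset.filter (fun T => (SimpleGraph.fromEdgeSet (↑T : Set (Sym2 V))).IsTree)

/-- The graph (Kirchhoff) polynomial `Ψ_G = Σ_T Π_{e ∉ T} α_e`, the sum running over the
spanning trees `T` of `G`; one variable `α_e` for each potential edge `e`. -/
noncomputable def graphPoly {V : Type*} [Fintype V] [DecidableEq V] (G : SimpleGraph V) :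
    MvPolynomial (Sym2 V) ℤ :=
  ∑ T ∈ spanningTrees G, ∏ e ∈ edgeFS G \ T, MvPolynomial.X e


open MvPolynomial

set_option linter.unusedSectionVars false
set_option maxHeartbeats 1600000

namespace ThreeValAux


open SimpleGraph Finset

variable {V : Type*} [DecidableEq V] (v : V)

noncomputable def core (S : Finset (Sym2 V)) : Finset (Sym2 V) :=
  S.filter (fun e => v ∉ e)

noncomputable def coreG (S : Finset (Sym2 V)) : SimpleGraph V :=
  fromEdgeSet (↑(core v S) : Set (Sym2 V))

lemma coreG_le (S : Finset (Sym2 V)) : coreG v S ≤ fromEdgeSet (↑S : Set (Sym2 V)) := by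
  apply fromEdgeSet_mono
  intro e he
  simp only [core, coe_filter, Set.mem_setOf_eq, Finset.mem_coe] at he
  exact he.1

lemma coreG_edge_avoid {S : Finset (Sym2 V)} {e : Sym2 V}
    (he : e ∈ (coreG v S).edgeSet) : e ∈ S ∧ v ∉ e := by
  rw [coreG, edgeSet_fromEdgeSet] at he
  have h1 := he.1
  simp only [Finset.mem_coe, core, Finset.mem_filter] at h1
  exact h1

lemma walk_avoid (S : Finset (Sym2 V)) {u w : V}
    (p : (fromEdgeSet (↑S : Set (Sym2 V))).Walk u w) (hp : v ∉ p.support) :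
    ∃ q : (coreG v S).Walk u w, q.edges = p.edges := by
  have hedges : ∀ e ∈ p.edges, e ∈ (coreG v S).edgeSet := by
    intro e he
    have heS : e ∈ (fromEdgeSet (↑S : Set (Sym2 V))).edgeSet := p.edges_subset_edgeSet he
    rw [edgeSet_fromEdgeSet] at heS
    have hv : v ∉ e := by
      intro hv
      induction e with
      | _ x y =>
        rcases Sym2.mem_iff.mp hv with rfl | rfl
        · exact hp (p.fst_mem_support_of_mem_edges he)
        · exact hp (p.snd_mem_support_of_mem_edges he)
    rw [coreG, edgeSet_fromEdgeSet]
    refine ⟨?_, heS.2⟩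
    simp only [Finset.mem_coe, core, Finset.mem_filter]
    exact ⟨heS.1, hv⟩
  exact ⟨p.transfer _ hedges, p.edges_transfer hedges⟩

lemma path_split_start (S : Finset (Sym2 V)) {w : V}
    (p : (fromEdgeSet (↑S : Set (Sym2 V))).Walk v w) (hp : p.IsPath) (hw : w ≠ v) :
    ∃ x, (fromEdgeSet (↑S : Set (Sym2 V))).Adj v x ∧ s(v, x) ∈ p.edges ∧
      ∃ q : (coreG v S).Walk x w, q.edges ⊆ p.edges := by
  cases p with
  | nil => exact absurd rfl hw
  | cons h q =>
    rename_i x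
    rw [SimpleGraph.Walk.cons_isPath_iff] at hp
    obtain ⟨q', hq'⟩ := walk_avoid v S q hp.2
    refine ⟨x, h, ?_, q', ?_⟩
    · simp
    · rw [hq']
      intro e he
      simp only [SimpleGraph.Walk.edges_cons, List.mem_cons]
      right; exact he

/-- Splitting a path through interior vertex `v`. -/
lemma path_split_mid (S : Finset (Sym2 V)) {u w : V}
    (p : (fromEdgeSet (↑S : Set (Sym2 V))).Walk u w) (hp : p.IsPath)
    (hu : u ≠ v) (hw : w ≠ v) (hv : v ∈ p.support) :
    ∃ x y, (fromEdgeSet (↑S : Set (Sym2 V))).Adj v x ∧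
      (fromEdgeSet (↑S : Set (Sym2 V))).Adj v y ∧ x ≠ y ∧
      (coreG v S).Reachable x u ∧ (coreG v S).Reachable y w := by
  let p1 := p.takeUntil v hv
  let p2 := p.dropUntil v hv
  have hp1 : p1.IsPath := hp.takeUntil hv
  have hp2 : p2.IsPath := hp.dropUntil hv
  have hp1r : p1.reverse.IsPath := hp1.reverse
  obtain ⟨x, hax, hex, qx, hqx⟩ := path_split_start v S p1.reverse hp1r hu
  obtain ⟨y, hay, hey, qy, hqy⟩ := path_split_start v S p2 hp2 hw
  refine ⟨x, y, hax, hay, ?_, ⟨qx⟩, ⟨qy⟩⟩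
  rintro rfl
  -- s(v,x) appears in both p1 and p2 edges, contradicting nodup of p.edges
  have hex' : s(v, x) ∈ p1.edges := by
    rwa [SimpleGraph.Walk.edges_reverse, List.mem_reverse] at hex
  have hspec := p.take_spec hv
  have hnodup : p.edges.Nodup := hp.isTrail.edges_nodup
  rw [← hspec, SimpleGraph.Walk.edges_append, List.nodup_append] at hnodup
  exact hnodup.2.2 _ hex' _ hey rfl







lemma ne_of_vedge_mem {T : Finset (Sym2 V)}
    (hT : ∀ e ∈ T, v ∈ e → ∃ x, x ≠ v ∧ e = s(v, x)) {x : V} (hx : s(v, x) ∈ T) : x ≠ v := by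
  obtain ⟨y, hy, hxy⟩ := hT _ hx (Sym2.mem_mk_left v x)
  rw [Sym2.congr_right] at hxy
  rwa [hxy]

lemma adj_fromEdgeSet_v {T : Finset (Sym2 V)}
    (hT : ∀ e ∈ T, v ∈ e → ∃ x, x ≠ v ∧ e = s(v, x)) (x : V) :
    (fromEdgeSet (↑T : Set (Sym2 V))).Adj v x ↔ s(v, x) ∈ T := by
  rw [fromEdgeSet_adj]
  constructor
  · rintro ⟨h, -⟩; exact Finset.mem_coe.mp h
  · intro h; exact ⟨Finset.mem_coe.mpr h, (ne_of_vedge_mem v hT h).symm⟩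

lemma mem_coreG_edgeSet {T : Finset (Sym2 V)} {e : Sym2 V} (heT : e ∈ T) (hve : v ∉ e)
    (hd : ¬ e.IsDiag) : e ∈ (coreG v T).edgeSet := by
  rw [coreG, edgeSet_fromEdgeSet]
  exact ⟨Finset.mem_coe.mpr (Finset.mem_filter.mpr ⟨heT, hve⟩), hd⟩

/-- Master characterization: `fromEdgeSet T` is a tree iff the core (edges avoiding `v`) is
acyclic and every vertex `w ≠ v` is connected in the core to a unique neighbor of `v`. -/
theorem isTree_iff_parts (T : Finset (Sym2 V))
    (hT : ∀ e ∈ T, v ∈ e → ∃ x, x ≠ v ∧ e = s(v, x)) :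
    (fromEdgeSet (↑T : Set (Sym2 V))).IsTree ↔
      ((coreG v T).IsAcyclic ∧
        ∀ w, w ≠ v → ∃! x, s(v, x) ∈ T ∧ (coreG v T).Reachable x w) := by
  constructor
  · intro h
    rw [isTree_iff] at h
    obtain ⟨hconn, hacyc⟩ := h
    constructor
    · -- core acyclic
      intro u c hc
      have hsub : ∀ e ∈ c.edges, e ∈ (fromEdgeSet (↑T : Set (Sym2 V))).edgeSet := by
        intro e he
        have h3 := c.edges_subset_edgeSet he
        obtain ⟨h1, h2⟩ := coreG_edge_avoid v h3
        rw [coreG, edgeSet_fromEdgeSet] at h3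
        rw [edgeSet_fromEdgeSet]
        exact ⟨Finset.mem_coe.mpr h1, h3.2⟩
      exact hacyc _ (hc.transfer hsub)
    · intro w hw
      obtain ⟨p⟩ := hconn.preconnected v w
      obtain ⟨x, hax, hex, q, hq⟩ := path_split_start v T p.toPath.1 p.toPath.2 hw
      refine ⟨x, ⟨(adj_fromEdgeSet_v v hT x).mp hax, ⟨q⟩⟩, ?_⟩
      rintro y ⟨hyT, hyw⟩
      by_contra hyx
      have hxv : x ≠ v := ne_of_vedge_mem v hT ((adj_fromEdgeSet_v v hT x).mp hax)
      have hreach : (coreG v T).Reachable y x := hyw.trans (Reachable.symm ⟨q⟩)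
      obtain ⟨Q⟩ := hreach
      -- s(v,x) is a bridge
      have hbx : (fromEdgeSet (↑T : Set (Sym2 V))).IsBridge s(v, x) := by
        rw [isAcyclic_iff_forall_edge_isBridge] at hacyc
        apply hacyc
        rw [edgeSet_fromEdgeSet]
        refine ⟨Finset.mem_coe.mpr ((adj_fromEdgeSet_v v hT x).mp hax), ?_⟩
        simp [Sym2.mk_isDiag_iff]
        exact fun h => hxv h.symm
      rw [isBridge_iff_adj_and_forall_walk_mem_edges] at hbx
      have hQsub : ∀ e ∈ Q.edges, e ∈ (fromEdgeSet (↑T : Set (Sym2 V))).edgeSet := by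
        intro e he
        have h3 := Q.edges_subset_edgeSet he
        obtain ⟨h1, h2⟩ := coreG_edge_avoid v h3
        rw [coreG, edgeSet_fromEdgeSet] at h3
        rw [edgeSet_fromEdgeSet]
        exact ⟨Finset.mem_coe.mpr h1, h3.2⟩
      have hW := hbx (SimpleGraph.Walk.cons ((adj_fromEdgeSet_v v hT y).mpr hyT)
        (Q.transfer _ hQsub))
      rw [SimpleGraph.Walk.edges_cons, List.mem_cons] at hW
      rcases hW with hW | hW
      · rw [Sym2.congr_right] at hW; exact hyx hW.symm
      · rw [SimpleGraph.Walk.edges_transfer] at hW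
        have := (coreG_edge_avoid v (Q.edges_subset_edgeSet hW)).2
        exact this (Sym2.mem_mk_left v x)
  · rintro ⟨hacyc, hreach⟩
    have hR : ∀ w, (fromEdgeSet (↑T : Set (Sym2 V))).Reachable v w := by
      intro w
      by_cases hw : w = v
      · subst hw; exact Reachable.refl _
      · obtain ⟨x, ⟨hxT, hxw⟩, -⟩ := hreach w hw
        exact (((adj_fromEdgeSet_v v hT x).mpr hxT).reachable).trans (hxw.mono (coreG_le v T))
    constructor
    · rw [connected_iff]
      exact ⟨fun u w => (hR u).symm.trans (hR w), ⟨v⟩⟩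
    · rw [isAcyclic_iff_forall_edge_isBridge]
      intro e he
      by_cases hve : v ∈ e
      · rw [edgeSet_fromEdgeSet] at he
        obtain ⟨x, hxv, rfl⟩ := hT e (Finset.mem_coe.mp he.1) hve
        rw [isBridge_iff_adj_and_forall_walk_mem_edges]
        intro W
        by_contra hWe
        have hP := W.toPath.2
        have hPe : s(v, x) ∉ (W.toPath.1).edges := fun h => hWe (W.edges_toPath_subset h)
        obtain ⟨y, hay, hey, qy, -⟩ := path_split_start v T W.toPath.1 hP hxv
        have hyx : y ≠ x := by rintro rfl; exact hPe hey
        obtain ⟨z, -, huniq⟩ := hreach x hxv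
        have h1 : x = z := huniq x ⟨Finset.mem_coe.mp he.1, Reachable.refl _⟩
        have h2 : y = z := huniq y ⟨(adj_fromEdgeSet_v v hT y).mp hay, ⟨qy⟩⟩
        exact hyx (h2.trans h1.symm)
      · rw [edgeSet_fromEdgeSet] at he
        induction e with
        | _ p q =>
          have hpq : p ≠ q := by
            intro h; exact he.2 (by simp [Sym2.mk_isDiag_iff, h])
          have hvp : p ≠ v := fun h => hve (by rw [h]; exact Sym2.mem_mk_left v q)
          have hvq : q ≠ v := fun h => hve (by rw [h]; exact Sym2.mem_mk_right p v)
          rw [isBridge_iff_adj_and_forall_walk_mem_edges]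
          intro W
          by_contra hWe
          have hP := W.toPath.2
          have hPe : s(p, q) ∉ (W.toPath.1).edges := fun h => hWe (W.edges_toPath_subset h)
          have hadjc : (coreG v T).Adj p q := by
            rw [coreG, fromEdgeSet_adj]
            refine ⟨Finset.mem_coe.mpr (Finset.mem_filter.mpr ⟨Finset.mem_coe.mp he.1, hve⟩), hpq⟩
          by_cases hvs : v ∈ (W.toPath.1).support
          · obtain ⟨x, y, hax, hay, hxy, hxp, hyq⟩ :=
              path_split_mid v T W.toPath.1 hP hvp hvq hvs
            obtain ⟨z, -, huniq⟩ := hreach q hvq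
            have h1 : x = z := huniq x ⟨(adj_fromEdgeSet_v v hT x).mp hax,
              hxp.trans hadjc.reachable⟩
            have h2 : y = z := huniq y ⟨(adj_fromEdgeSet_v v hT y).mp hay, hyq⟩
            exact hxy (h1.trans h2.symm)
          · obtain ⟨Q, hQ⟩ := walk_avoid v T W.toPath.1 hvs
            have hbr : (coreG v T).IsBridge s(p, q) := by
              rw [isAcyclic_iff_forall_edge_isBridge] at hacyc
              exact hacyc (mem_coreG_edgeSet v (Finset.mem_coe.mp he.1) hve he.2)
            rw [isBridge_iff_adj_and_forall_walk_mem_edges] at hbr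
            have := hbr Q
            rw [hQ] at this
            exact hPe this







lemma core_insert_erase (T : Finset (Sym2 V)) (x y : V) :
    core v (insert s(v, y) (T.erase s(v, x))) = core v T := by
  ext e
  simp only [core, mem_filter, mem_insert, mem_erase]
  constructor
  · rintro ⟨h1, h2⟩
    refine ⟨?_, h2⟩
    rcases h1 with rfl | ⟨-, h⟩
    · exact absurd (Sym2.mem_mk_left v y) h2
    · exact h
  · rintro ⟨h1, h2⟩
    refine ⟨Or.inr ⟨?_, h1⟩, h2⟩
    rintro rfl; exact h2 (Sym2.mem_mk_left v x)

lemma coreG_insert_erase (T : Finset (Sym2 V)) (x y : V) :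
    coreG v (insert s(v, y) (T.erase s(v, x))) = coreG v T := by
  unfold coreG
  rw [core_insert_erase]

lemma vedge_mem_insert_erase {T : Finset (Sym2 V)} {x y : V} (u : V) :
    s(v, u) ∈ insert s(v, y) (T.erase s(v, x)) ↔ u = y ∨ (u ≠ x ∧ s(v, u) ∈ T) := by
  constructor
  · rintro h
    rcases mem_insert.mp h with h1 | h1
    · exact Or.inl (Sym2.congr_right.mp h1)
    · exact Or.inr ⟨fun hux => (mem_erase.mp h1).1 (by rw [hux]), mem_of_mem_erase h1⟩
  · rintro (rfl | ⟨hux, hT'⟩)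
    · exact mem_insert_self _ _
    · exact mem_insert_of_mem (mem_erase.mpr ⟨fun h => hux (Sym2.congr_right.mp h), hT'⟩)

lemma tree_swap {T : Finset (Sym2 V)} (hT : ∀ e ∈ T, v ∈ e → ∃ x, x ≠ v ∧ e = s(v, x))
    {x y : V} (hyv : y ≠ v) (hxT : s(v, x) ∈ T)
    (htree : (fromEdgeSet (↑T : Set (Sym2 V))).IsTree)
    (hreach : (coreG v T).Reachable x y) :
    (fromEdgeSet (↑(insert s(v, y) (T.erase s(v, x))) : Set (Sym2 V))).IsTree := by
  have hT' : ∀ e ∈ insert s(v, y) (T.erase s(v, x)), v ∈ e → ∃ u, u ≠ v ∧ e = s(v, u) := by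
    intro e he hve
    rcases mem_insert.mp he with rfl | he'
    · exact ⟨y, hyv, rfl⟩
    · exact hT e (mem_of_mem_erase he') hve
  rw [isTree_iff_parts v _ hT']
  rw [isTree_iff_parts v T hT] at htree
  obtain ⟨hacyc, hre⟩ := htree
  rw [coreG_insert_erase]
  refine ⟨hacyc, ?_⟩
  intro w hw
  obtain ⟨z, ⟨hzT, hzw⟩, huniq⟩ := hre w hw
  by_cases hzx : z = x
  · subst hzx
    refine ⟨y, ⟨(vedge_mem_insert_erase v y).mpr (Or.inl rfl), hreach.symm.trans hzw⟩, ?_⟩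
    rintro u ⟨huT', huw⟩
    rcases (vedge_mem_insert_erase v u).mp huT' with rfl | ⟨hux, huT⟩
    · rfl
    · exact absurd (huniq u ⟨huT, huw⟩) hux
  · refine ⟨z, ⟨(vedge_mem_insert_erase v z).mpr (Or.inr ⟨hzx, hzT⟩), hzw⟩, ?_⟩
    rintro u ⟨huT', huw⟩
    rcases (vedge_mem_insert_erase v u).mp huT' with rfl | ⟨hux, huT⟩
    · exact (hzx (huniq x ⟨hxT, hreach.trans huw⟩).symm).elim
    · exact huniq u ⟨huT, huw⟩

lemma reach_of_tree {T : Finset (Sym2 V)}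
    (hT : ∀ e ∈ T, v ∈ e → ∃ x, x ≠ v ∧ e = s(v, x))
    (htree : (fromEdgeSet (↑T : Set (Sym2 V))).IsTree) {w : V} (hw : w ≠ v) :
    ∃ x, s(v, x) ∈ T ∧ (coreG v T).Reachable x w := by
  rw [isTree_iff_parts v T hT] at htree
  obtain ⟨z, hz, -⟩ := htree.2 w hw
  exact ⟨z, hz⟩

lemma reach_dichotomy {T : Finset (Sym2 V)}
    (hT : ∀ e ∈ T, v ∈ e → ∃ x, x ≠ v ∧ e = s(v, x)) {x y z : V}
    (hzv : z ≠ v) (hxy : x ≠ y)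
    (hvedges : ∀ u, s(v, u) ∈ T → u = x ∨ u = y)
    (hxT : s(v, x) ∈ T) (hyT : s(v, y) ∈ T)
    (htree : (fromEdgeSet (↑T : Set (Sym2 V))).IsTree) :
    ((coreG v T).Reachable x z ↔ ¬ (coreG v T).Reachable y z) := by
  rw [isTree_iff_parts v T hT] at htree
  obtain ⟨u, ⟨huT, huz⟩, huniq⟩ := htree.2 z hzv
  constructor
  · intro hxz hyz
    exact hxy ((huniq x ⟨hxT, hxz⟩).trans (huniq y ⟨hyT, hyz⟩).symm)
  · intro hny
    rcases hvedges u huT with rfl | rfl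
    · exact huz
    · exact absurd huz hny


end ThreeValAux

/-- Structure of the graph polynomial at a 3-valent vertex: if `G` is connected with a vertex
`v` of degree 3 whose incident edges are `e₁ = va`, `e₂ = vb`, `e₃ = vc`, then
`Ψ_G = f₀(α₁α₂ + α₁α₃ + α₂α₃) + (f₁+f₂)α₃ + (f₂+f₃)α₁ + (f₁+f₃)α₂ + f₁₂₃` for some
polynomials `f₀, f₁, f₂, f₃, f₁₂₃` not involving the variables `α₁, α₂, α₃`. -/
theorem graphPoly_three_valent_structure {V : Type*} [Fintype V] [DecidableEq V]
    (G : SimpleGraph V) (hconn : G.Connected) (v a b c : V)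
    (hnbrs : G.neighborSet v = {a, b, c}) (hab : a ≠ b) (hac : a ≠ c) (hbc : b ≠ c) :
    ∃ f0 f1 f2 f3 f123 : MvPolynomial (Sym2 V) ℤ,
      (∀ f ∈ [f0, f1, f2, f3, f123], ∀ e ∈ [s(v, a), s(v, b), s(v, c)],
        MvPolynomial.degreeOf e f = 0) ∧
      graphPoly G =
        f0 * (X s(v, a) * X s(v, b) + X s(v, a) * X s(v, c) + X s(v, b) * X s(v, c))
          + (f1 + f2) * X s(v, c) + (f2 + f3) * X s(v, a) + (f1 + f3) * X s(v, b)
          + f123 := by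
  classical
  have hGa : G.Adj v a := by
    have h : a ∈ G.neighborSet v := by rw [hnbrs]; exact Set.mem_insert _ _
    exact h
  have hGb : G.Adj v b := by
    have h : b ∈ G.neighborSet v := by
      rw [hnbrs]; exact Set.mem_insert_of_mem _ (Set.mem_insert _ _)
    exact h
  have hGc : G.Adj v c := by
    have h : c ∈ G.neighborSet v := by
      rw [hnbrs]; exact Set.mem_insert_of_mem _ (Set.mem_insert_of_mem _ rfl)
    exact h
  have hva : a ≠ v := hGa.ne'
  have hvb : b ≠ v := hGb.ne'
  have hvc : c ≠ v := hGc.ne'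
  have he12 : s(v, a) ≠ s(v, b) := fun h => hab (Sym2.congr_right.mp h)
  have he13 : s(v, a) ≠ s(v, c) := fun h => hac (Sym2.congr_right.mp h)
  have he23 : s(v, b) ≠ s(v, c) := fun h => hbc (Sym2.congr_right.mp h)
  set K : Finset (Sym2 V) := {s(v, a), s(v, b), s(v, c)} with hK
  have he1K : s(v, a) ∈ K := by simp [hK]
  have he2K : s(v, b) ∈ K := by simp [hK]
  have he3K : s(v, c) ∈ K := by simp [hK]
  have heE : ∀ x : V, G.Adj v x → s(v, x) ∈ edgeFS G := by
    intro x hx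
    simp only [edgeFS, Finset.mem_filter, Finset.mem_univ, true_and]
    exact hx
  have hKE : ∀ e ∈ K, e ∈ edgeFS G := by
    intro e he
    simp only [hK, Finset.mem_insert, Finset.mem_singleton] at he
    rcases he with rfl | rfl | rfl
    exacts [heE a hGa, heE b hGb, heE c hGc]
  have hSmem : ∀ T : Finset (Sym2 V), T ∈ spanningTrees G ↔
      T ⊆ edgeFS G ∧ (SimpleGraph.fromEdgeSet (↑T : Set (Sym2 V))).IsTree := by
    intro T
    rw [spanningTrees, Finset.mem_filter, Finset.mem_powerset]
  have hform : ∀ T : Finset (Sym2 V), T ⊆ edgeFS G →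
      ∀ e ∈ T, v ∈ e → ∃ x, x ≠ v ∧ e = s(v, x) := by
    intro T hTE e heT hve
    have heG : e ∈ G.edgeSet := by
      have h := hTE heT
      simp only [edgeFS, Finset.mem_filter] at h
      exact h.2
    rcases Sym2.mem_iff_exists.mp hve with ⟨x, rfl⟩
    have hadj : G.Adj v x := heG
    exact ⟨x, hadj.ne', rfl⟩
  have hvedges : ∀ T : Finset (Sym2 V), T ⊆ edgeFS G →
      ∀ u : V, s(v, u) ∈ T → u = a ∨ u = b ∨ u = c := by
    intro T hTE u hu
    have hadj : G.Adj v u := by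
      have h := hTE hu
      simp only [edgeFS, Finset.mem_filter] at h
      exact h.2
    have hmem : u ∈ G.neighborSet v := hadj
    rw [hnbrs] at hmem
    simpa using hmem
  -- remainder polynomial
  set m : Finset (Sym2 V) → MvPolynomial (Sym2 V) ℤ :=
    fun T => ∏ e ∈ (edgeFS G \ K) \ T, X e with hm
  set g : Finset (Sym2 V) → MvPolynomial (Sym2 V) ℤ :=
    fun T => (∏ e ∈ K \ T, X e) * m T with hg
  -- step A : factor out the K-part of each tree's monomial
  have hfact : graphPoly G = ∑ T ∈ spanningTrees G, g T := by
    rw [graphPoly]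
    refine Finset.sum_congr rfl ?_
    intro T hT
    have hTE : T ⊆ edgeFS G := ((hSmem T).mp hT).1
    simp only [hg]
    rw [← Finset.prod_filter_mul_prod_filter_not (edgeFS G \ T) (· ∈ K)]
    congr 1
    · apply Finset.prod_congr _ (fun _ _ => rfl)
      ext e
      simp only [Finset.mem_filter, Finset.mem_sdiff]
      constructor
      · rintro ⟨⟨h1, h2⟩, h3⟩; exact ⟨h3, h2⟩
      · rintro ⟨h1, h2⟩; exact ⟨⟨hKE e h1, h2⟩, h1⟩
    · simp only [hm]
      apply Finset.prod_congr _ (fun _ _ => rfl)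
      ext e
      simp only [Finset.mem_filter, Finset.mem_sdiff]
      tauto
  -- generic binary split of a sum
  have hsplit2 : ∀ (A : Finset (Finset (Sym2 V))) (p : Finset (Sym2 V) → Prop)
      [DecidablePred p] (f : Finset (Sym2 V) → MvPolynomial (Sym2 V) ℤ),
      ∑ T ∈ A, f T = ∑ T ∈ A.filter p, f T + ∑ T ∈ A.filter (fun T => ¬ p T), f T :=
    fun A p _ f => (Finset.sum_filter_add_sum_filter_not A p f).symm
  -- step B : split the sum into the 8 membership patterns
  have hsplit : ∑ T ∈ spanningTrees G, g T
      = ∑ T ∈ (spanningTrees G).filter (fun T => (s(v, a) ∈ T ∧ s(v, b) ∈ T) ∧ s(v, c) ∈ T), g T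
      + ∑ T ∈ (spanningTrees G).filter (fun T => (s(v, a) ∈ T ∧ s(v, b) ∈ T) ∧ ¬ s(v, c) ∈ T), g T
      + ∑ T ∈ (spanningTrees G).filter (fun T => (s(v, a) ∈ T ∧ ¬ s(v, b) ∈ T) ∧ s(v, c) ∈ T), g T
      + ∑ T ∈ (spanningTrees G).filter (fun T => (s(v, a) ∈ T ∧ ¬ s(v, b) ∈ T) ∧ ¬ s(v, c) ∈ T), g T
      + ∑ T ∈ (spanningTrees G).filter (fun T => (¬ s(v, a) ∈ T ∧ s(v, b) ∈ T) ∧ s(v, c) ∈ T), g T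
      + ∑ T ∈ (spanningTrees G).filter (fun T => (¬ s(v, a) ∈ T ∧ s(v, b) ∈ T) ∧ ¬ s(v, c) ∈ T), g T
      + ∑ T ∈ (spanningTrees G).filter (fun T => (¬ s(v, a) ∈ T ∧ ¬ s(v, b) ∈ T) ∧ s(v, c) ∈ T), g T
      + ∑ T ∈ (spanningTrees G).filter (fun T => (¬ s(v, a) ∈ T ∧ ¬ s(v, b) ∈ T) ∧ ¬ s(v, c) ∈ T), g T := by
    rw [hsplit2 (spanningTrees G) (fun T => s(v, a) ∈ T) g,
        hsplit2 ((spanningTrees G).filter (fun T => s(v, a) ∈ T)) (fun T => s(v, b) ∈ T) g,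
        hsplit2 ((spanningTrees G).filter (fun T => ¬ s(v, a) ∈ T)) (fun T => s(v, b) ∈ T) g,
        hsplit2 (((spanningTrees G).filter (fun T => s(v, a) ∈ T)).filter (fun T => s(v, b) ∈ T)) (fun T => s(v, c) ∈ T) g,
        hsplit2 (((spanningTrees G).filter (fun T => s(v, a) ∈ T)).filter (fun T => ¬ s(v, b) ∈ T)) (fun T => s(v, c) ∈ T) g,
        hsplit2 (((spanningTrees G).filter (fun T => ¬ s(v, a) ∈ T)).filter (fun T => s(v, b) ∈ T)) (fun T => s(v, c) ∈ T) g,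
        hsplit2 (((spanningTrees G).filter (fun T => ¬ s(v, a) ∈ T)).filter (fun T => ¬ s(v, b) ∈ T)) (fun T => s(v, c) ∈ T) g]
    simp only [Finset.filter_filter]
    ring
  -- step C : compute the fixed monomial on each pattern class
  have hKdiff3 : ∀ T : Finset (Sym2 V), s(v, a) ∈ T → s(v, b) ∈ T → ¬ s(v, c) ∈ T → K \ T = {s(v, c)} := by
    intro T h1 h2 h3
    rw [hK, Finset.sdiff_eq_filter, Finset.filter_insert, if_neg (not_not.mpr h1),
      Finset.filter_insert, if_neg (not_not.mpr h2), Finset.filter_singleton, if_pos h3]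
  have hKdiff2 : ∀ T : Finset (Sym2 V), s(v, a) ∈ T → ¬ s(v, b) ∈ T → s(v, c) ∈ T → K \ T = {s(v, b)} := by
    intro T h1 h2 h3
    rw [hK, Finset.sdiff_eq_filter, Finset.filter_insert, if_neg (not_not.mpr h1),
      Finset.filter_insert, if_pos h2, Finset.filter_singleton, if_neg (not_not.mpr h3)]
    simp
  have hKdiff1 : ∀ T : Finset (Sym2 V), ¬ s(v, a) ∈ T → s(v, b) ∈ T → s(v, c) ∈ T → K \ T = {s(v, a)} := by
    intro T h1 h2 h3
    rw [hK, Finset.sdiff_eq_filter, Finset.filter_insert, if_pos h1,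
      Finset.filter_insert, if_neg (not_not.mpr h2), Finset.filter_singleton,
      if_neg (not_not.mpr h3)]
    simp
  have hKdiff23 : ∀ T : Finset (Sym2 V), s(v, a) ∈ T → ¬ s(v, b) ∈ T → ¬ s(v, c) ∈ T →
      K \ T = {s(v, b), s(v, c)} := by
    intro T h1 h2 h3
    rw [hK, Finset.sdiff_eq_filter, Finset.filter_insert, if_neg (not_not.mpr h1),
      Finset.filter_insert, if_pos h2, Finset.filter_singleton, if_pos h3]
  have hKdiff13 : ∀ T : Finset (Sym2 V), ¬ s(v, a) ∈ T → s(v, b) ∈ T → ¬ s(v, c) ∈ T →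
      K \ T = {s(v, a), s(v, c)} := by
    intro T h1 h2 h3
    rw [hK, Finset.sdiff_eq_filter, Finset.filter_insert, if_pos h1,
      Finset.filter_insert, if_neg (not_not.mpr h2), Finset.filter_singleton, if_pos h3]
  have hKdiff12 : ∀ T : Finset (Sym2 V), ¬ s(v, a) ∈ T → ¬ s(v, b) ∈ T → s(v, c) ∈ T →
      K \ T = {s(v, a), s(v, b)} := by
    intro T h1 h2 h3
    rw [hK, Finset.sdiff_eq_filter, Finset.filter_insert, if_pos h1,
      Finset.filter_insert, if_pos h2, Finset.filter_singleton, if_neg (not_not.mpr h3)]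
    simp
  have hKdiff0 : ∀ T : Finset (Sym2 V), s(v, a) ∈ T → s(v, b) ∈ T → s(v, c) ∈ T → K \ T = ∅ := by
    intro T h1 h2 h3
    rw [hK, Finset.sdiff_eq_filter, Finset.filter_insert, if_neg (not_not.mpr h1),
      Finset.filter_insert, if_neg (not_not.mpr h2), Finset.filter_singleton,
      if_neg (not_not.mpr h3)]
  -- class sums as monomial times m-sums
  have hC111 : ∑ T ∈ (spanningTrees G).filter (fun T => (s(v, a) ∈ T ∧ s(v, b) ∈ T) ∧ s(v, c) ∈ T), g T
      = ∑ T ∈ (spanningTrees G).filter (fun T => (s(v, a) ∈ T ∧ s(v, b) ∈ T) ∧ s(v, c) ∈ T), m T := by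
    refine Finset.sum_congr rfl ?_
    intro T hT
    simp only [Finset.mem_filter] at hT
    obtain ⟨-, ⟨h1, h2⟩, h3⟩ := hT
    simp only [hg]
    rw [hKdiff0 T h1 h2 h3, Finset.prod_empty, one_mul]
  have hC110 : ∑ T ∈ (spanningTrees G).filter (fun T => (s(v, a) ∈ T ∧ s(v, b) ∈ T) ∧ ¬ s(v, c) ∈ T), g T
      = X s(v, c) * ∑ T ∈ (spanningTrees G).filter (fun T => (s(v, a) ∈ T ∧ s(v, b) ∈ T) ∧ ¬ s(v, c) ∈ T), m T := by
    rw [Finset.mul_sum]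
    refine Finset.sum_congr rfl ?_
    intro T hT
    simp only [Finset.mem_filter] at hT
    obtain ⟨-, ⟨h1, h2⟩, h3⟩ := hT
    simp only [hg]
    rw [hKdiff3 T h1 h2 h3, Finset.prod_singleton]
  have hC101 : ∑ T ∈ (spanningTrees G).filter (fun T => (s(v, a) ∈ T ∧ ¬ s(v, b) ∈ T) ∧ s(v, c) ∈ T), g T
      = X s(v, b) * ∑ T ∈ (spanningTrees G).filter (fun T => (s(v, a) ∈ T ∧ ¬ s(v, b) ∈ T) ∧ s(v, c) ∈ T), m T := by
    rw [Finset.mul_sum]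
    refine Finset.sum_congr rfl ?_
    intro T hT
    simp only [Finset.mem_filter] at hT
    obtain ⟨-, ⟨h1, h2⟩, h3⟩ := hT
    simp only [hg]
    rw [hKdiff2 T h1 h2 h3, Finset.prod_singleton]
  have hC011 : ∑ T ∈ (spanningTrees G).filter (fun T => (¬ s(v, a) ∈ T ∧ s(v, b) ∈ T) ∧ s(v, c) ∈ T), g T
      = X s(v, a) * ∑ T ∈ (spanningTrees G).filter (fun T => (¬ s(v, a) ∈ T ∧ s(v, b) ∈ T) ∧ s(v, c) ∈ T), m T := by
    rw [Finset.mul_sum]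
    refine Finset.sum_congr rfl ?_
    intro T hT
    simp only [Finset.mem_filter] at hT
    obtain ⟨-, ⟨h1, h2⟩, h3⟩ := hT
    simp only [hg]
    rw [hKdiff1 T h1 h2 h3, Finset.prod_singleton]
  have hC100 : ∑ T ∈ (spanningTrees G).filter (fun T => (s(v, a) ∈ T ∧ ¬ s(v, b) ∈ T) ∧ ¬ s(v, c) ∈ T), g T
      = (X s(v, b) * X s(v, c)) *
        ∑ T ∈ (spanningTrees G).filter (fun T => (s(v, a) ∈ T ∧ ¬ s(v, b) ∈ T) ∧ ¬ s(v, c) ∈ T), m T := by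
    rw [Finset.mul_sum]
    refine Finset.sum_congr rfl ?_
    intro T hT
    simp only [Finset.mem_filter] at hT
    obtain ⟨-, ⟨h1, h2⟩, h3⟩ := hT
    simp only [hg]
    rw [hKdiff23 T h1 h2 h3, Finset.prod_insert (by simp [he23]), Finset.prod_singleton]
  have hC010 : ∑ T ∈ (spanningTrees G).filter (fun T => (¬ s(v, a) ∈ T ∧ s(v, b) ∈ T) ∧ ¬ s(v, c) ∈ T), g T
      = (X s(v, a) * X s(v, c)) *
        ∑ T ∈ (spanningTrees G).filter (fun T => (¬ s(v, a) ∈ T ∧ s(v, b) ∈ T) ∧ ¬ s(v, c) ∈ T), m T := by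
    rw [Finset.mul_sum]
    refine Finset.sum_congr rfl ?_
    intro T hT
    simp only [Finset.mem_filter] at hT
    obtain ⟨-, ⟨h1, h2⟩, h3⟩ := hT
    simp only [hg]
    rw [hKdiff13 T h1 h2 h3, Finset.prod_insert (by simp [he13]), Finset.prod_singleton]
  have hC001 : ∑ T ∈ (spanningTrees G).filter (fun T => (¬ s(v, a) ∈ T ∧ ¬ s(v, b) ∈ T) ∧ s(v, c) ∈ T), g T
      = (X s(v, a) * X s(v, b)) *
        ∑ T ∈ (spanningTrees G).filter (fun T => (¬ s(v, a) ∈ T ∧ ¬ s(v, b) ∈ T) ∧ s(v, c) ∈ T), m T := by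
    rw [Finset.mul_sum]
    refine Finset.sum_congr rfl ?_
    intro T hT
    simp only [Finset.mem_filter] at hT
    obtain ⟨-, ⟨h1, h2⟩, h3⟩ := hT
    simp only [hg]
    rw [hKdiff12 T h1 h2 h3, Finset.prod_insert (by simp [he12]), Finset.prod_singleton]
  have hC000 : (spanningTrees G).filter (fun T => (¬ s(v, a) ∈ T ∧ ¬ s(v, b) ∈ T) ∧ ¬ s(v, c) ∈ T) = ∅ := by
    rw [Finset.filter_eq_empty_iff]
    rintro T hTS ⟨⟨h1, h2⟩, h3⟩
    obtain ⟨hTE, htree⟩ := (hSmem T).mp hTS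
    obtain ⟨x, hxT, -⟩ := ThreeValAux.reach_of_tree v (hform T hTE) htree hva
    rcases hvedges T hTE x hxT with rfl | rfl | rfl
    exacts [h1 hxT, h2 hxT, h3 hxT]
  -- dichotomy of reachability
  have hdich : ∀ (x y z : V), x ≠ y → z ≠ v →
      (∀ u : V, u = a ∨ u = b ∨ u = c → u = x ∨ u = y ∨ u = z) →
      ∀ T ∈ spanningTrees G, s(v, x) ∈ T → s(v, y) ∈ T → s(v, z) ∉ T →
      (¬ (ThreeValAux.coreG v T).Reachable x z ↔ (ThreeValAux.coreG v T).Reachable y z) := by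
    intro x y z hxy hzv hperm T hTS hxT hyT hzT
    obtain ⟨hTE, htree⟩ := (hSmem T).mp hTS
    have hvu : ∀ u, s(v, u) ∈ T → u = x ∨ u = y := by
      intro u hu
      rcases hperm u (hvedges T hTE u hu) with rfl | rfl | rfl
      · exact Or.inl rfl
      · exact Or.inr rfl
      · exact absurd hu hzT
    have hd := ThreeValAux.reach_dichotomy v (hform T hTE) hzv hxy hvu hxT hyT htree
    tauto
  -- reachability is automatic when only one edge at v is present
  have hfullreach : ∀ (x w : V), w ≠ v →
      ∀ T ∈ spanningTrees G, (∀ u, s(v, u) ∈ T → u = x) →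
      (ThreeValAux.coreG v T).Reachable x w := by
    intro x w hwv T hTS honly
    obtain ⟨hTE, htree⟩ := (hSmem T).mp hTS
    obtain ⟨u, huT, hre⟩ := ThreeValAux.reach_of_tree v (hform T hTE) htree hwv
    rwa [honly u huT] at hre
  -- splits of the linear classes along the reachability dichotomy
  have hsplit110 : ∑ T ∈ (spanningTrees G).filter (fun T => (s(v, a) ∈ T ∧ s(v, b) ∈ T) ∧ ¬ s(v, c) ∈ T), m T
      = ∑ T ∈ ((spanningTrees G).filter (fun T => (s(v, a) ∈ T ∧ s(v, b) ∈ T) ∧ ¬ s(v, c) ∈ T)).filter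
          (fun T => (ThreeValAux.coreG v T).Reachable a c), m T
      + ∑ T ∈ ((spanningTrees G).filter (fun T => (s(v, a) ∈ T ∧ s(v, b) ∈ T) ∧ ¬ s(v, c) ∈ T)).filter
          (fun T => (ThreeValAux.coreG v T).Reachable b c), m T := by
    rw [hsplit2 ((spanningTrees G).filter (fun T => (s(v, a) ∈ T ∧ s(v, b) ∈ T) ∧ ¬ s(v, c) ∈ T))
      (fun T => (ThreeValAux.coreG v T).Reachable a c) m]
    congr 1
    refine Finset.sum_congr (Finset.filter_congr ?_) (fun _ _ => rfl)
    intro T hT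
    simp only [Finset.mem_filter] at hT
    obtain ⟨hTS, ⟨h1, h2⟩, h3⟩ := hT
    exact hdich a b c hab hvc (by tauto) T hTS h1 h2 h3
  have hsplit011 : ∑ T ∈ (spanningTrees G).filter (fun T => (¬ s(v, a) ∈ T ∧ s(v, b) ∈ T) ∧ s(v, c) ∈ T), m T
      = ∑ T ∈ ((spanningTrees G).filter (fun T => (¬ s(v, a) ∈ T ∧ s(v, b) ∈ T) ∧ s(v, c) ∈ T)).filter
          (fun T => (ThreeValAux.coreG v T).Reachable b a), m T
      + ∑ T ∈ ((spanningTrees G).filter (fun T => (¬ s(v, a) ∈ T ∧ s(v, b) ∈ T) ∧ s(v, c) ∈ T)).filter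
          (fun T => (ThreeValAux.coreG v T).Reachable c a), m T := by
    rw [hsplit2 ((spanningTrees G).filter (fun T => (¬ s(v, a) ∈ T ∧ s(v, b) ∈ T) ∧ s(v, c) ∈ T))
      (fun T => (ThreeValAux.coreG v T).Reachable b a) m]
    congr 1
    refine Finset.sum_congr (Finset.filter_congr ?_) (fun _ _ => rfl)
    intro T hT
    simp only [Finset.mem_filter] at hT
    obtain ⟨hTS, ⟨h1, h2⟩, h3⟩ := hT
    exact hdich b c a hbc hva (by tauto) T hTS h2 h3 h1
  have hsplit101 : ∑ T ∈ (spanningTrees G).filter (fun T => (s(v, a) ∈ T ∧ ¬ s(v, b) ∈ T) ∧ s(v, c) ∈ T), m T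
      = ∑ T ∈ ((spanningTrees G).filter (fun T => (s(v, a) ∈ T ∧ ¬ s(v, b) ∈ T) ∧ s(v, c) ∈ T)).filter
          (fun T => (ThreeValAux.coreG v T).Reachable a b), m T
      + ∑ T ∈ ((spanningTrees G).filter (fun T => (s(v, a) ∈ T ∧ ¬ s(v, b) ∈ T) ∧ s(v, c) ∈ T)).filter
          (fun T => (ThreeValAux.coreG v T).Reachable c b), m T := by
    rw [hsplit2 ((spanningTrees G).filter (fun T => (s(v, a) ∈ T ∧ ¬ s(v, b) ∈ T) ∧ s(v, c) ∈ T))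
      (fun T => (ThreeValAux.coreG v T).Reachable a b) m]
    congr 1
    refine Finset.sum_congr (Finset.filter_congr ?_) (fun _ _ => rfl)
    intro T hT
    simp only [Finset.mem_filter] at hT
    obtain ⟨hTS, ⟨h1, h2⟩, h3⟩ := hT
    exact hdich a c b hac hvb (by tauto) T hTS h1 h3 h2
  -- the quadratic classes are entirely within one reachability class
  have hfull100 : (spanningTrees G).filter (fun T => (s(v, a) ∈ T ∧ ¬ s(v, b) ∈ T) ∧ ¬ s(v, c) ∈ T)
      = ((spanningTrees G).filter (fun T => (s(v, a) ∈ T ∧ ¬ s(v, b) ∈ T) ∧ ¬ s(v, c) ∈ T)).filter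
        (fun T => (ThreeValAux.coreG v T).Reachable a c) := by
    refine (Finset.filter_true_of_mem ?_).symm
    intro T hT
    simp only [Finset.mem_filter] at hT
    obtain ⟨hTS, ⟨h1, h2⟩, h3⟩ := hT
    refine hfullreach a c hvc T hTS ?_
    intro u hu
    rcases hvedges T ((hSmem T).mp hTS).1 u hu with rfl | rfl | rfl
    · rfl
    · exact absurd hu h2
    · exact absurd hu h3
  have hfull010 : (spanningTrees G).filter (fun T => (¬ s(v, a) ∈ T ∧ s(v, b) ∈ T) ∧ ¬ s(v, c) ∈ T)
      = ((spanningTrees G).filter (fun T => (¬ s(v, a) ∈ T ∧ s(v, b) ∈ T) ∧ ¬ s(v, c) ∈ T)).filter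
        (fun T => (ThreeValAux.coreG v T).Reachable b c) := by
    refine (Finset.filter_true_of_mem ?_).symm
    intro T hT
    simp only [Finset.mem_filter] at hT
    obtain ⟨hTS, ⟨h1, h2⟩, h3⟩ := hT
    refine hfullreach b c hvc T hTS ?_
    intro u hu
    rcases hvedges T ((hSmem T).mp hTS).1 u hu with rfl | rfl | rfl
    · exact absurd hu h1
    · rfl
    · exact absurd hu h3
  have hfull001a : (spanningTrees G).filter (fun T => (¬ s(v, a) ∈ T ∧ ¬ s(v, b) ∈ T) ∧ s(v, c) ∈ T)
      = ((spanningTrees G).filter (fun T => (¬ s(v, a) ∈ T ∧ ¬ s(v, b) ∈ T) ∧ s(v, c) ∈ T)).filter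
        (fun T => (ThreeValAux.coreG v T).Reachable c a) := by
    refine (Finset.filter_true_of_mem ?_).symm
    intro T hT
    simp only [Finset.mem_filter] at hT
    obtain ⟨hTS, ⟨h1, h2⟩, h3⟩ := hT
    refine hfullreach c a hva T hTS ?_
    intro u hu
    rcases hvedges T ((hSmem T).mp hTS).1 u hu with rfl | rfl | rfl
    · exact absurd hu h1
    · exact absurd hu h2
    · rfl
  have hfull001b : (spanningTrees G).filter (fun T => (¬ s(v, a) ∈ T ∧ ¬ s(v, b) ∈ T) ∧ s(v, c) ∈ T)
      = ((spanningTrees G).filter (fun T => (¬ s(v, a) ∈ T ∧ ¬ s(v, b) ∈ T) ∧ s(v, c) ∈ T)).filter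
        (fun T => (ThreeValAux.coreG v T).Reachable c b) := by
    refine (Finset.filter_true_of_mem ?_).symm
    intro T hT
    simp only [Finset.mem_filter] at hT
    obtain ⟨hTS, ⟨h1, h2⟩, h3⟩ := hT
    refine hfullreach c b hvb T hTS ?_
    intro u hu
    rcases hvedges T ((hSmem T).mp hTS).1 u hu with rfl | rfl | rfl
    · exact absurd hu h1
    · exact absurd hu h2
    · rfl
  -- the edge-swap bijection
  have hbij : ∀ (x y : V) (P : Finset (Sym2 V) → Prop)
      (A B : Finset (Finset (Sym2 V))),
      G.Adj v x → G.Adj v y → x ≠ y → s(v, x) ∈ K → s(v, y) ∈ K →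
      (∀ T, P T → P (insert s(v, y) (T.erase s(v, x)))) →
      (∀ T, P T → P (insert s(v, x) (T.erase s(v, y)))) →
      (∀ T, T ∈ A ↔ T ∈ spanningTrees G ∧ (s(v, x) ∈ T ∧ s(v, y) ∉ T ∧ P T ∧
        (ThreeValAux.coreG v T).Reachable x y)) →
      (∀ T, T ∈ B ↔ T ∈ spanningTrees G ∧ (s(v, y) ∈ T ∧ s(v, x) ∉ T ∧ P T ∧
        (ThreeValAux.coreG v T).Reachable y x)) →
      ∑ T ∈ A, m T = ∑ T ∈ B, m T := by
    intro x y P A B hx hy hxy hxK hyK hP1 hP2 hA hB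
    have hmm : ∀ (x' y' : V), s(v, x') ∈ K → s(v, y') ∈ K → ∀ T : Finset (Sym2 V),
        m (insert s(v, y') (T.erase s(v, x'))) = m T := by
      intro x' y' hxK' hyK' T
      simp only [hm]
      have hset : (edgeFS G \ K) \ (insert s(v, y') (T.erase s(v, x')))
          = (edgeFS G \ K) \ T := by
        ext e
        simp only [Finset.mem_sdiff, Finset.mem_insert, Finset.mem_erase]
        constructor
        · rintro ⟨⟨heE, heK⟩, h2⟩
          exact ⟨⟨heE, heK⟩, fun heT => h2 (Or.inr ⟨fun h => heK (h ▸ hxK'), heT⟩)⟩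
        · rintro ⟨⟨heE, heK⟩, h2⟩
          refine ⟨⟨heE, heK⟩, ?_⟩
          rintro (rfl | ⟨-, heT⟩)
          · exact heK hyK'
          · exact h2 heT
      rw [hset]
    have hmemb : ∀ (x' y' : V) (P' : Finset (Sym2 V) → Prop),
        G.Adj v x' → G.Adj v y' → x' ≠ y' →
        (∀ T, P' T → P' (insert s(v, y') (T.erase s(v, x')))) →
        ∀ T, (T ∈ spanningTrees G ∧ (s(v, x') ∈ T ∧ s(v, y') ∉ T ∧ P' T ∧
            (ThreeValAux.coreG v T).Reachable x' y')) →
        (insert s(v, y') (T.erase s(v, x')) ∈ spanningTrees G ∧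
          (s(v, y') ∈ insert s(v, y') (T.erase s(v, x')) ∧
           s(v, x') ∉ insert s(v, y') (T.erase s(v, x')) ∧
           P' (insert s(v, y') (T.erase s(v, x'))) ∧
           (ThreeValAux.coreG v (insert s(v, y') (T.erase s(v, x')))).Reachable y' x')) := by
      intro x' y' P' hx' hy' hxy' hP' T hT
      obtain ⟨hTS, hxT, hyT, hPT, hrch⟩ := hT
      obtain ⟨hTE, htree⟩ := (hSmem T).mp hTS
      refine ⟨(hSmem _).mpr ⟨?_, ?_⟩, ?_, ?_, hP' T hPT, ?_⟩
      · intro e he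
        rcases Finset.mem_insert.mp he with rfl | he'
        · exact heE y' hy'
        · exact hTE (Finset.mem_of_mem_erase he')
      · exact ThreeValAux.tree_swap v (hform T hTE) hy'.ne' hxT htree hrch
      · exact Finset.mem_insert_self _ _
      · intro hmem'
        rcases (ThreeValAux.vedge_mem_insert_erase v x').mp hmem' with h | ⟨h, -⟩
        · exact hxy' h
        · exact h rfl
      · rw [ThreeValAux.coreG_insert_erase]
        exact hrch.symm
    have hinv : ∀ (x' y' : V), x' ≠ y' → ∀ T : Finset (Sym2 V),
        s(v, x') ∈ T → s(v, y') ∉ T →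
        insert s(v, x') ((insert s(v, y') (T.erase s(v, x'))).erase s(v, y')) = T := by
      intro x' y' hxy' T hxT hyT
      have hne : s(v, x') ≠ s(v, y') := fun h => hxy' (Sym2.congr_right.mp h)
      ext e
      by_cases hex : e = s(v, x')
      · subst hex; simp [hxT]
      · by_cases hey : e = s(v, y')
        · subst hey
          simp [hyT, hne, Ne.symm hne]
        · simp [Finset.mem_insert, Finset.mem_erase, hex, hey]
    refine Finset.sum_nbij' (fun T => insert s(v, y) (T.erase s(v, x)))
      (fun T => insert s(v, x) (T.erase s(v, y))) ?_ ?_ ?_ ?_ ?_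
    · intro T hT
      exact (hB _).mpr (hmemb x y P hx hy hxy hP1 T ((hA T).mp hT))
    · intro T hT
      exact (hA _).mpr (hmemb y x P hy hx hxy.symm hP2 T ((hB T).mp hT))
    · intro T hT
      have h := (hA T).mp hT
      exact hinv x y hxy T h.2.1 h.2.2.1
    · intro T hT
      have h := (hB T).mp hT
      exact hinv y x hxy.symm T h.2.1 h.2.2.1
    · intro T hT
      exact (hmm x y hxK hyK T).symm
  -- P-invariance helpers
  have hPnotin : ∀ (z x' y' : V), z ≠ y' → ∀ T : Finset (Sym2 V), s(v, z) ∉ T →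
      s(v, z) ∉ insert s(v, y') (T.erase s(v, x')) := by
    intro z x' y' hzy T hz h
    rcases (ThreeValAux.vedge_mem_insert_erase v z).mp h with h' | ⟨-, h'⟩
    · exact hzy h'
    · exact hz h'
  have hPin : ∀ (z x' y' : V), z ≠ x' → ∀ T : Finset (Sym2 V), s(v, z) ∈ T →
      s(v, z) ∈ insert s(v, y') (T.erase s(v, x')) := by
    intro z x' y' hzx T hz
    exact (ThreeValAux.vedge_mem_insert_erase v z).mpr (Or.inr ⟨hzx, hz⟩)
  -- the five bijective identities
  have hB1 : ∑ T ∈ ((spanningTrees G).filter (fun T => (s(v, a) ∈ T ∧ ¬ s(v, b) ∈ T) ∧ ¬ s(v, c) ∈ T)).filter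
        (fun T => (ThreeValAux.coreG v T).Reachable a c), m T
      = ∑ T ∈ ((spanningTrees G).filter (fun T => (¬ s(v, a) ∈ T ∧ ¬ s(v, b) ∈ T) ∧ s(v, c) ∈ T)).filter
        (fun T => (ThreeValAux.coreG v T).Reachable c a), m T := by
    refine hbij a c (fun T => s(v, b) ∉ T) _ _ hGa hGc hac he1K he3K
      (fun T h => hPnotin b a c hbc T h) (fun T h => hPnotin b c a hab.symm T h) ?_ ?_
    · intro T
      simp only [Finset.mem_filter]
      tauto
    · intro T
      simp only [Finset.mem_filter]
      tauto
  have hB2 : ∑ T ∈ ((spanningTrees G).filter (fun T => (¬ s(v, a) ∈ T ∧ s(v, b) ∈ T) ∧ ¬ s(v, c) ∈ T)).filter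
        (fun T => (ThreeValAux.coreG v T).Reachable b c), m T
      = ∑ T ∈ ((spanningTrees G).filter (fun T => (¬ s(v, a) ∈ T ∧ ¬ s(v, b) ∈ T) ∧ s(v, c) ∈ T)).filter
        (fun T => (ThreeValAux.coreG v T).Reachable c b), m T := by
    refine hbij b c (fun T => s(v, a) ∉ T) _ _ hGb hGc hbc he2K he3K
      (fun T h => hPnotin a b c hac T h) (fun T h => hPnotin a c b hab T h) ?_ ?_
    · intro T
      simp only [Finset.mem_filter]
      tauto
    · intro T
      simp only [Finset.mem_filter]
      tauto
  have hB3 : ∑ T ∈ ((spanningTrees G).filter (fun T => (s(v, a) ∈ T ∧ s(v, b) ∈ T) ∧ ¬ s(v, c) ∈ T)).filter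
        (fun T => (ThreeValAux.coreG v T).Reachable a c), m T
      = ∑ T ∈ ((spanningTrees G).filter (fun T => (¬ s(v, a) ∈ T ∧ s(v, b) ∈ T) ∧ s(v, c) ∈ T)).filter
        (fun T => (ThreeValAux.coreG v T).Reachable c a), m T := by
    refine hbij a c (fun T => s(v, b) ∈ T) _ _ hGa hGc hac he1K he3K
      (fun T h => hPin b a c hab.symm T h) (fun T h => hPin b c a hbc T h) ?_ ?_
    · intro T
      simp only [Finset.mem_filter]
      tauto
    · intro T
      simp only [Finset.mem_filter]
      tauto
  have hB4 : ∑ T ∈ ((spanningTrees G).filter (fun T => (s(v, a) ∈ T ∧ s(v, b) ∈ T) ∧ ¬ s(v, c) ∈ T)).filter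
        (fun T => (ThreeValAux.coreG v T).Reachable b c), m T
      = ∑ T ∈ ((spanningTrees G).filter (fun T => (s(v, a) ∈ T ∧ ¬ s(v, b) ∈ T) ∧ s(v, c) ∈ T)).filter
        (fun T => (ThreeValAux.coreG v T).Reachable c b), m T := by
    refine hbij b c (fun T => s(v, a) ∈ T) _ _ hGb hGc hbc he2K he3K
      (fun T h => hPin a b c hab T h) (fun T h => hPin a c b hac T h) ?_ ?_
    · intro T
      simp only [Finset.mem_filter]
      tauto
    · intro T
      simp only [Finset.mem_filter]
      tauto
  have hB5 : ∑ T ∈ ((spanningTrees G).filter (fun T => (¬ s(v, a) ∈ T ∧ s(v, b) ∈ T) ∧ s(v, c) ∈ T)).filter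
        (fun T => (ThreeValAux.coreG v T).Reachable b a), m T
      = ∑ T ∈ ((spanningTrees G).filter (fun T => (s(v, a) ∈ T ∧ ¬ s(v, b) ∈ T) ∧ s(v, c) ∈ T)).filter
        (fun T => (ThreeValAux.coreG v T).Reachable a b), m T := by
    refine hbij b a (fun T => s(v, c) ∈ T) _ _ hGb hGa hab.symm he2K he1K
      (fun T h => hPin c b a hbc.symm T h) (fun T h => hPin c a b hac.symm T h) ?_ ?_
    · intro T
      simp only [Finset.mem_filter]
      tauto
    · intro T
      simp only [Finset.mem_filter]
      tauto
  -- coefficient identities for the quadratic classes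
  have hq1 : ∑ T ∈ (spanningTrees G).filter (fun T => (s(v, a) ∈ T ∧ ¬ s(v, b) ∈ T) ∧ ¬ s(v, c) ∈ T), m T
      = ∑ T ∈ (spanningTrees G).filter (fun T => (¬ s(v, a) ∈ T ∧ ¬ s(v, b) ∈ T) ∧ s(v, c) ∈ T), m T := by
    conv_lhs => rw [hfull100]
    rw [hB1, ← hfull001a]
  have hq2 : ∑ T ∈ (spanningTrees G).filter (fun T => (¬ s(v, a) ∈ T ∧ s(v, b) ∈ T) ∧ ¬ s(v, c) ∈ T), m T
      = ∑ T ∈ (spanningTrees G).filter (fun T => (¬ s(v, a) ∈ T ∧ ¬ s(v, b) ∈ T) ∧ s(v, c) ∈ T), m T := by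
    conv_lhs => rw [hfull010]
    rw [hB2, ← hfull001b]
  -- degrees
  have hdeg : ∀ (A : Finset (Finset (Sym2 V))) (e0 : Sym2 V), e0 ∈ K →
      MvPolynomial.degreeOf e0 (∑ T ∈ A, m T) = 0 := by
    intro A e0 he0
    refine Nat.eq_zero_of_le_zero (le_trans (degreeOf_sum_le _ _ _) ?_)
    rw [Finset.sup_le_iff]
    intro T hT
    simp only [hm]
    refine le_trans (degreeOf_prod_le _ _ _) ?_
    have hz : ∀ e ∈ (edgeFS G \ K) \ T, MvPolynomial.degreeOf e0 (X e : MvPolynomial (Sym2 V) ℤ) = 0 := by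
      intro e he
      have hne : e0 ≠ e := by
        rintro rfl
        exact (Finset.mem_sdiff.mp (Finset.mem_sdiff.mp he).1).2 he0
      rw [degreeOf_X, if_neg hne]
    rw [Finset.sum_congr rfl hz, Finset.sum_const, smul_zero]
  refine ⟨∑ T ∈ (spanningTrees G).filter (fun T => (¬ s(v, a) ∈ T ∧ ¬ s(v, b) ∈ T) ∧ s(v, c) ∈ T), m T,
    ∑ T ∈ ((spanningTrees G).filter (fun T => (s(v, a) ∈ T ∧ s(v, b) ∈ T) ∧ ¬ s(v, c) ∈ T)).filter
      (fun T => (ThreeValAux.coreG v T).Reachable b c), m T,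
    ∑ T ∈ ((spanningTrees G).filter (fun T => (s(v, a) ∈ T ∧ s(v, b) ∈ T) ∧ ¬ s(v, c) ∈ T)).filter
      (fun T => (ThreeValAux.coreG v T).Reachable a c), m T,
    ∑ T ∈ ((spanningTrees G).filter (fun T => (¬ s(v, a) ∈ T ∧ s(v, b) ∈ T) ∧ s(v, c) ∈ T)).filter
      (fun T => (ThreeValAux.coreG v T).Reachable b a), m T,
    ∑ T ∈ (spanningTrees G).filter (fun T => (s(v, a) ∈ T ∧ s(v, b) ∈ T) ∧ s(v, c) ∈ T), m T,
    ?_, ?_⟩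
  · intro f hf e he
    have heK : e ∈ K := by
      simp only [List.mem_cons, List.not_mem_nil, or_false] at he
      rcases he with rfl | rfl | rfl
      exacts [he1K, he2K, he3K]
    simp only [List.mem_cons, List.not_mem_nil, or_false] at hf
    rcases hf with rfl | rfl | rfl | rfl | rfl <;> exact hdeg _ _ heK
  · rw [hfact, hsplit, hC111, hC110, hC101, hC011, hC100, hC010, hC001, hC000,
      Finset.sum_empty, hsplit110, hsplit101, hsplit011, hq1, hq2, ← hB5, ← hB4, ← hB3]
    ring
end

section
/- If f₀f₁₂₃ = f₁f₂ + f₁f₃ + f₂f₃, then the ideal (f₀, f₁+f₃) has the same radical as the ideal (f₀, f₁, f₃); equivalently V(f₀, f₁+f₃) = V(f₀, f₁, f₃) as sets. -/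
/-- If `f₀f₁₂₃ = f₁f₂ + f₁f₃ + f₂f₃` in a commutative ring, then the ideal `(f₀, f₁+f₃)` has
the same radical as `(f₀, f₁, f₃)`; equivalently `V(f₀, f₁+f₃) = V(f₀, f₁, f₃)` as sets. -/
theorem radical_f0_f1_add_f3 {R : Type*} [CommRing R] (f0 f1 f2 f3 f123 : R)
    (h : f0 * f123 = f1 * f2 + f1 * f3 + f2 * f3) :
    (Ideal.span ({f0, f1 + f3} : Set R)).radical =
      (Ideal.span ({f0, f1, f3} : Set R)).radical := by
  set I := Ideal.span ({f0, f1 + f3} : Set R)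
  have hf0 : f0 ∈ I := Ideal.subset_span (by simp)
  have hs : f1 + f3 ∈ I := Ideal.subset_span (by simp)
  have h1 : f1 ∈ I.radical := by
    refine ⟨2, ?_⟩
    have : f1 ^ 2 = (f1 + f2) * (f1 + f3) + (-f123) * f0 := by linear_combination h
    rw [this]
    exact I.add_mem (I.mul_mem_left _ hs) (I.mul_mem_left _ hf0)
  have h3 : f3 ∈ I.radical := by
    refine ⟨2, ?_⟩
    have : f3 ^ 2 = (f3 + f2) * (f1 + f3) + (-f123) * f0 := by linear_combination h
    rw [this]
    exact I.add_mem (I.mul_mem_left _ hs) (I.mul_mem_left _ hf0)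
  apply le_antisymm
  · apply Ideal.radical_mono
    rw [Ideal.span_le]
    intro x hx
    rcases hx with rfl | rfl
    · exact Ideal.subset_span (by simp)
    · exact Ideal.add_mem _ (Ideal.subset_span (by simp)) (Ideal.subset_span (by simp))
  · have : Ideal.span ({f0, f1, f3} : Set R) ≤ I.radical := by
      rw [Ideal.span_le]
      intro x hx
      rcases hx with rfl | rfl | rfl
      · exact Ideal.le_radical hf0
      · exact h1
      · exact h3
    calc (Ideal.span ({f0, f1, f3} : Set R)).radical ≤ I.radical.radical :=
          Ideal.radical_mono this
      _ = I.radical := I.radical_idem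
end
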